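/- Let n, m : ℕ and let C : V_n → V_m → V_n → V_m → Prop. Then there exists a function g : V_n → V_m such that C w (g w) w' (g w') holds for all w, w' ∈ V_n, if and only if there exist a nonempty type A and functions r : A → V_n and s : A → V_m satisfying: (α1) for all a, b : A, if r a = r b then s a = s b; (α2) for all a, b : A, C (r a) (s a) (r b) (s b); and (β) for every a : A there exists b : A with num(r b) = (num(r a) + 1) mod 2^n. -/

import Mathlib

/-- `num v` is the number encoded by the boolean vector `v`. -/
def num {n : ℕ} (v : Fin n → Bool) : ℕ :=
  ∑ i : Fin n, 2 ^ (i : ℕ) * (if v i then 1 else 0)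

noncomputable def numE (n : ℕ) : (Fin n → Bool) ≃ Fin (2 ^ n) :=
  (Equiv.arrowCongr (Equiv.refl _) finTwoEquiv.symm).trans finFunctionFinEquiv

lemma num_eq (n : ℕ) (v : Fin n → Bool) : num v = (numE n v : ℕ) := by
  simp [num, numE, finFunctionFinEquiv_apply, finTwoEquiv, mul_comm]
  congr 1; ext i; cases h : v i <;> simp [h]

lemma num_lt (n : ℕ) (v : Fin n → Bool) : num v < 2 ^ n := by
  rw [num_eq]; exact (numE n v).isLt

lemma num_inj {n : ℕ} {v w : Fin n → Bool} (h : num v = num w) : v = w := by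
  rw [num_eq, num_eq] at h
  exact (numE n).injective (Fin.val_injective h)

lemma num_surj {n : ℕ} (k : ℕ) (hk : k < 2 ^ n) : ∃ v : Fin n → Bool, num v = k :=
  ⟨(numE n).symm ⟨k, hk⟩, by rw [num_eq]; simp⟩

theorem stmt_10 (n m : ℕ)
    (C : (Fin n → Bool) → (Fin m → Bool) → (Fin n → Bool) → (Fin m → Bool) → Prop) :
    (∃ g : (Fin n → Bool) → (Fin m → Bool),
        ∀ w w' : Fin n → Bool, C w (g w) w' (g w'))
      ↔
    (∃ (A : Type) (_ : Nonempty A) (r : A → (Fin n → Bool)) (s : A → (Fin m → Bool)),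
        (∀ a b : A, r a = r b → s a = s b) ∧
        (∀ a b : A, C (r a) (s a) (r b) (s b)) ∧
        (∀ a : A, ∃ b : A, num (r b) = (num (r a) + 1) % 2 ^ n)) := by
  constructor
  · rintro ⟨g, hg⟩
    refine ⟨Fin n → Bool, ⟨fun _ => false⟩, id, g, fun a b h => by simp only [id] at h; rw [h], hg, fun a => ?_⟩
    exact num_surj _ (Nat.mod_lt _ (pow_pos two_pos n))
  · rintro ⟨A, ⟨a0⟩, r, s, hα1, hα2, hβ⟩
    -- every residue is hit by `num ∘ r`
    have key : ∀ t : ℕ, ∃ a : A, num (r a) = (num (r a0) + t) % 2 ^ n := by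
      intro t
      induction t with
      | zero => exact ⟨a0, (Nat.mod_eq_of_lt (num_lt n (r a0))).symm⟩
      | succ t ih =>
          obtain ⟨a, ha⟩ := ih
          obtain ⟨b, hb⟩ := hβ a
          exact ⟨b, by rw [hb, ha, Nat.mod_add_mod, Nat.add_assoc]⟩
    have rsurj : ∀ w : Fin n → Bool, ∃ a : A, r a = w := by
      intro w
      obtain ⟨a, ha⟩ := key (2 ^ n + num w - num (r a0))
      refine ⟨a, num_inj ?_⟩
      rw [ha, Nat.add_sub_cancel' (le_trans (num_lt n (r a0)).le (Nat.le_add_right _ _)),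
        Nat.add_mod_left, Nat.mod_eq_of_lt (num_lt n w)]
    choose f hf using rsurj
    refine ⟨fun w => s (f w), fun w w' => ?_⟩
    have := hα2 (f w) (f w')
    rwa [hf w, hf w'] at this
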